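/- For α ∈ (0,1) and λ ≥ 0, the unique continuous solution u : [0,∞) → ℝ of the fractional integral equation u(t) = u₀ - λ J^α u(t) with u(0) = u₀ satisfies: if u₀ ≥ 0 then 0 ≤ u(t) ≤ u₀ for all t ≥ 0. (Special case λ = 0: u ≡ u₀.) -/

import Mathlib

open MeasureTheory Real Set

set_option maxHeartbeats 1000000

theorem fractional_ode_bounds
    (α lam u₀ : ℝ) (hα : α ∈ Ioo (0:ℝ) 1) (hlam : 0 ≤ lam)
    (u : ℝ → ℝ) (hu : ContinuousOn u (Ici 0)) (hu0 : u 0 = u₀)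
    (heq : ∀ t : ℝ, 0 ≤ t →
      u t = u₀ - lam * ∫ s in Ioc 0 t, (t - s) ^ (α - 1) / Real.Gamma α * u s)
    (hpos : 0 ≤ u₀) :
    ∀ t : ℝ, 0 ≤ t → 0 ≤ u t ∧ u t ≤ u₀ := by
  obtain ⟨hα0, hα1⟩ := hα
  have hc : 0 < Real.Gamma α := Real.Gamma_pos_of_pos hα0
  set c := Real.Gamma α with hcdef
  have hca : 0 < c * α := by positivity
  -- antiderivative computation for the kernel
  have hcomp : ∀ a b t : ℝ, a ≤ b →
      (∫ r in Ioc a b, (t - r) ^ (α - 1)) = ((t - a) ^ α - (t - b) ^ α) / α := by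
    intro a b t hab
    rw [← intervalIntegral.integral_of_le hab,
      intervalIntegral.integral_comp_sub_left (fun x => x ^ (α - 1)) t,
      integral_rpow (Or.inl (by linarith))]
    rw [sub_add_cancel]
  -- integrability of the kernel alone
  have hK : ∀ t s : ℝ, 0 ≤ t → s ≤ t →
      IntegrableOn (fun r : ℝ => (t - r) ^ (α - 1) / c) (Ioc 0 s) volume := by
    intro t s ht hst
    have h1 : IntervalIntegrable (fun x : ℝ => x ^ (α - 1)) volume 0 t :=
      intervalIntegral.intervalIntegrable_rpow' (by linarith)
    have h2 : IntervalIntegrable (fun r : ℝ => (t - r) ^ (α - 1)) volume 0 t := by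
      simpa using (h1.comp_sub_left t).symm
    have h3 : IntegrableOn (fun r : ℝ => (t - r) ^ (α - 1)) (Ioc 0 t) volume :=
      (intervalIntegrable_iff_integrableOn_Ioc_of_le ht).mp h2
    exact IntegrableOn.mono_set (h3.div_const c) (Ioc_subset_Ioc_right hst)
  -- integrability of kernel * u
  have hInt : ∀ t : ℝ, 0 ≤ t →
      IntegrableOn (fun r => (t - r) ^ (α - 1) / c * u r) (Ioc 0 t) volume := by
    intro t ht
    have h4 : IntegrableOn (fun r : ℝ => (t - r) ^ (α - 1) / c) (Ioc 0 t) volume :=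
      hK t t ht le_rfl
    obtain ⟨M, hM⟩ := isCompact_Icc.exists_bound_of_continuousOn
      (hu.mono (Icc_subset_Ici_self : Icc 0 t ⊆ Ici 0))
    have hum : AEStronglyMeasurable u (volume.restrict (Ioc 0 t)) :=
      (hu.mono (fun x hx => le_of_lt hx.1)).aestronglyMeasurable measurableSet_Ioc
    have hb : ∀ᵐ x ∂(volume.restrict (Ioc 0 t)), ‖u x‖ ≤ M := by
      filter_upwards [ae_restrict_mem measurableSet_Ioc] with x hx
      exact hM x ⟨hx.1.le, hx.2⟩
    have := Integrable.bdd_mul (c := M) h4 hum hb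
    exact (by simpa [mul_comm] using this :
      Integrable (fun r => (t - r) ^ (α - 1) / c * u r) (volume.restrict (Ioc 0 t)))
  -- Lower bound: u ≥ 0 on [0, ∞)
  have hlow : ∀ t : ℝ, 0 ≤ t → 0 ≤ u t := by
    by_contra hcon
    push_neg at hcon
    obtain ⟨t₁, ht₁, hneg⟩ := hcon
    have hucont : ContinuousOn u (Icc 0 t₁) := hu.mono Icc_subset_Ici_self
    obtain ⟨tm, htm, hminOn⟩ :=
      isCompact_Icc.exists_isMinOn (nonempty_Icc.mpr ht₁) hucont
    have hmin : ∀ x ∈ Icc (0:ℝ) t₁, u tm ≤ u x := fun x hx => hminOn hx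
    set m := u tm with hmdef
    have hmneg : m < 0 := lt_of_le_of_lt (hmin t₁ ⟨ht₁, le_refl t₁⟩) hneg
    set S := {t : ℝ | t ∈ Icc 0 t₁ ∧ u t ≤ m} with hSdef
    have hSclosed : IsClosed S := by
      have hS2 : S = Icc 0 t₁ ∩ u ⁻¹' (Iic m) := by
        ext x; simp [hSdef, and_comm]
      rw [hS2]
      exact hucont.preimage_isClosed_of_isClosed isClosed_Icc isClosed_Iic
    have hSne : S.Nonempty := ⟨tm, htm, le_refl m⟩
    have hSbdd : BddBelow S := ⟨0, fun x hx => hx.1.1⟩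
    set p := sInf S with hpdef
    have hpS : p ∈ S := hSclosed.csInf_mem hSne hSbdd
    have hp0 : 0 ≤ p := hpS.1.1
    have hp1 : p ≤ t₁ := hpS.1.2
    have hup : u p = m := le_antisymm hpS.2 (hmin p hpS.1)
    have hppos : 0 < p := by
      rcases hp0.lt_or_eq with hlt | heq0
      · exact hlt
      · exfalso
        have h0S : u 0 ≤ m := by rw [heq0]; exact hpS.2
        rw [hu0] at h0S
        linarith
    -- choose the window size h
    set q := (c * α / (2 * lam + 2)) ^ (α⁻¹) with hqdef
    have hq : 0 < q := Real.rpow_pos_of_pos (by positivity) _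
    set h := min p q with hhdef
    have hh0 : 0 < h := lt_min hppos hq
    have hhp : h ≤ p := min_le_left _ _
    have hph0 : 0 ≤ p - h := by linarith
    -- maximizer of u on [p - h, p]
    have hsub2 : Icc (p - h) p ⊆ Icc 0 t₁ := fun x hx =>
      ⟨le_trans hph0 hx.1, hx.2.trans hp1⟩
    obtain ⟨s, hsmem, hsmaxOn⟩ := isCompact_Icc.exists_isMaxOn
      (nonempty_Icc.mpr (by linarith)) (hucont.mono hsub2)
    have hsmax : ∀ x ∈ Icc (p - h) p, u x ≤ u s := fun x hx => hsmaxOn hx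
    have hs0 : 0 ≤ s := le_trans hph0 hsmem.1
    have hsp : s ≤ p := hsmem.2
    set ω := u s - m with hωdef
    have hω0 : 0 ≤ ω := by
      have hps' := hsmax p ⟨by linarith, le_refl p⟩
      rw [hup] at hps'
      rw [hωdef]; linarith
    -- integrability facts
    have hIp := hInt p hp0
    have hIs := hInt s hs0
    have hIps : IntegrableOn (fun r => (p - r) ^ (α - 1) / c * u r) (Ioc 0 s) volume :=
      IntegrableOn.mono_set hIp (Ioc_subset_Ioc_right hsp)
    have hIsp : IntegrableOn (fun r => (p - r) ^ (α - 1) / c * u r) (Ioc s p) volume :=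
      IntegrableOn.mono_set hIp (Ioc_subset_Ioc_left hs0)
    -- split the integral over (0, p]
    have hsplit : (∫ r in Ioc 0 p, (p - r) ^ (α - 1) / c * u r)
        = (∫ r in Ioc 0 s, (p - r) ^ (α - 1) / c * u r)
          + ∫ r in Ioc s p, (p - r) ^ (α - 1) / c * u r := by
      rw [← setIntegral_union (Ioc_disjoint_Ioc_of_le le_rfl) measurableSet_Ioc hIps hIsp,
        Ioc_union_Ioc_eq_Ioc hs0 hsp]
    -- bound on (0, s]
    have hbound1 : (∫ r in Ioc 0 s, (p - r) ^ (α - 1) / c * u r)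
        - (∫ r in Ioc 0 s, (s - r) ^ (α - 1) / c * u r)
        ≤ m * ((p ^ α - (p - s) ^ α) / (c * α) - s ^ α / (c * α)) := by
      have hKps := hK p s hp0 hsp
      have hKss := hK s s hs0 le_rfl
      have step1 : (∫ r in Ioc 0 s, (p - r) ^ (α - 1) / c * u r)
          - (∫ r in Ioc 0 s, (s - r) ^ (α - 1) / c * u r)
          = ∫ r in Ioc 0 s,
              ((p - r) ^ (α - 1) / c * u r - (s - r) ^ (α - 1) / c * u r) := by
        rw [integral_sub hIps hIs]
      rw [step1]
      have step2 : (∫ r in Ioc 0 s,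
            ((p - r) ^ (α - 1) / c * u r - (s - r) ^ (α - 1) / c * u r))
          ≤ ∫ r in Ioc 0 s, ((p - r) ^ (α - 1) / c - (s - r) ^ (α - 1) / c) * m := by
        rw [integral_Ioc_eq_integral_Ioo, integral_Ioc_eq_integral_Ioo]
        apply setIntegral_mono_on
        · exact IntegrableOn.mono_set (hIps.sub hIs) Ioo_subset_Ioc_self
        · exact IntegrableOn.mono_set ((hKps.sub hKss).mul_const m) Ioo_subset_Ioc_self
        · exact measurableSet_Ioo
        · intro r hr
          have hr1 : 0 < r := hr.1
          have hr2 : r < s := hr.2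
          have hAB : (p - r) ^ (α - 1) / c ≤ (s - r) ^ (α - 1) / c :=
            (div_le_div_iff_of_pos_right hc).mpr
              (Real.rpow_le_rpow_of_nonpos (by linarith) (by linarith) (by linarith))
          have hmu : m ≤ u r := hmin r ⟨hr1.le, le_trans hr2.le (hsp.trans hp1)⟩
          have key : 0 ≤ ((s - r) ^ (α - 1) / c - (p - r) ^ (α - 1) / c) * (u r - m) :=
            mul_nonneg (by linarith) (by linarith)
          nlinarith [key]
      refine step2.trans ?_
      have heval : (∫ r in Ioc 0 s, ((p - r) ^ (α - 1) / c - (s - r) ^ (α - 1) / c) * m)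
          = ((∫ r in Ioc 0 s, (p - r) ^ (α - 1)) / c
            - (∫ r in Ioc 0 s, (s - r) ^ (α - 1)) / c) * m := by
        rw [integral_mul_const, integral_sub hKps hKss, integral_div, integral_div]
      rw [heval, hcomp 0 s p hs0, hcomp 0 s s hs0]
      rw [sub_self, Real.zero_rpow hα0.ne', sub_zero, sub_zero, sub_zero]
      exact le_of_eq (by ring)
    -- bound on (s, p]
    have hbound2 : (∫ r in Ioc s p, (p - r) ^ (α - 1) / c * u r)
        ≤ u s * ((p - s) ^ α / (c * α)) := by
      have hKsp : IntegrableOn (fun r : ℝ => (p - r) ^ (α - 1) / c) (Ioc s p) volume :=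
        IntegrableOn.mono_set (hK p p hp0 le_rfl) (Ioc_subset_Ioc_left hs0)
      have step : (∫ r in Ioc s p, (p - r) ^ (α - 1) / c * u r)
          ≤ ∫ r in Ioc s p, (p - r) ^ (α - 1) / c * u s := by
        apply setIntegral_mono_on hIsp (hKsp.mul_const (u s)) measurableSet_Ioc
        intro r hr
        have hus : u r ≤ u s := hsmax r ⟨by linarith [hr.1, hsmem.1], hr.2⟩
        have hker : 0 ≤ (p - r) ^ (α - 1) / c :=
          div_nonneg (Real.rpow_nonneg (by linarith [hr.2]) _) hc.le
        exact mul_le_mul_of_nonneg_left hus hker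
      refine step.trans ?_
      rw [integral_mul_const, integral_div, hcomp s p p hsp]
      rw [sub_self, Real.zero_rpow hα0.ne', sub_zero]
      exact le_of_eq (by ring)
    -- the key self-improving estimate
    have hE1 : u s - m = lam * ((∫ r in Ioc 0 p, (p - r) ^ (α - 1) / c * u r)
        - ∫ r in Ioc 0 s, (s - r) ^ (α - 1) / c * u r) := by
      rw [← hup, heq s hs0, heq p hp0]
      ring
    have hY : (p - s) ^ α ≤ h ^ α :=
      Real.rpow_le_rpow (by linarith) (by linarith [hsmem.1]) hα0.le
    have hZ : s ^ α ≤ p ^ α := Real.rpow_le_rpow hs0 hsp hα0.le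
    have hfinal : m * ((p ^ α - (p - s) ^ α) / (c * α) - s ^ α / (c * α))
        + u s * ((p - s) ^ α / (c * α)) ≤ ω * (h ^ α / (c * α)) := by
      have husω : u s = ω + m := by rw [hωdef]; ring
      have hnum : m * (p ^ α - s ^ α) + ω * (p - s) ^ α ≤ ω * h ^ α := by
        nlinarith [mul_nonneg hω0 (sub_nonneg.mpr hY),
          mul_nonneg (neg_nonneg.mpr hmneg.le) (sub_nonneg.mpr hZ)]
      calc m * ((p ^ α - (p - s) ^ α) / (c * α) - s ^ α / (c * α))
            + u s * ((p - s) ^ α / (c * α))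
          = (m * (p ^ α - s ^ α) + ω * (p - s) ^ α) / (c * α) := by
            rw [husω]; field_simp; ring
        _ ≤ (ω * h ^ α) / (c * α) := (div_le_div_iff_of_pos_right hca).mpr hnum
        _ = ω * (h ^ α / (c * α)) := by ring
    have hchain : u s - m ≤ lam * (ω * (h ^ α / (c * α))) := by
      rw [hE1, hsplit]
      apply mul_le_mul_of_nonneg_left ?_ hlam
      linarith [hbound1, hbound2, hfinal]
    have hfrac : lam * (h ^ α / (c * α)) ≤ 1 / 2 := by
      have hhq : h ≤ q := min_le_right _ _
      have hqα : q ^ α = c * α / (2 * lam + 2) := by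
        rw [hqdef, ← Real.rpow_mul (by positivity), inv_mul_cancel₀ hα0.ne',
          Real.rpow_one]
      have hH : h ^ α ≤ c * α / (2 * lam + 2) := by
        rw [← hqα]; exact Real.rpow_le_rpow hh0.le hhq hα0.le
      have h2 : (0:ℝ) < 2 * lam + 2 := by linarith
      calc lam * (h ^ α / (c * α)) ≤ lam * ((c * α / (2 * lam + 2)) / (c * α)) :=
            mul_le_mul_of_nonneg_left ((div_le_div_iff_of_pos_right hca).mpr hH) hlam
        _ = lam / (2 * lam + 2) := by field_simp
        _ ≤ 1 / 2 := by rw [div_le_iff₀ h2]; linarith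
    have hωhalf : ω ≤ 1 / 2 * ω := by
      calc ω = u s - m := hωdef
        _ ≤ lam * (ω * (h ^ α / (c * α))) := hchain
        _ = (lam * (h ^ α / (c * α))) * ω := by ring
        _ ≤ 1 / 2 * ω := mul_le_mul_of_nonneg_right hfrac hω0
    have husm : u s ≤ m := by
      have hω' : u s - m ≤ 0 := by rw [← hωdef]; linarith
      linarith
    have hmemS : p - h ∈ S :=
      ⟨⟨hph0, by linarith⟩, le_trans (hsmax (p - h) ⟨le_refl _, by linarith⟩) husm⟩
    have hple : p ≤ p - h := csInf_le hSbdd hmemS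
    linarith
  -- conclusion
  intro t ht
  refine ⟨hlow t ht, ?_⟩
  rw [heq t ht]
  have hnn : 0 ≤ ∫ s in Ioc 0 t, (t - s) ^ (α - 1) / c * u s := by
    apply setIntegral_nonneg measurableSet_Ioc
    intro r hr
    exact mul_nonneg (div_nonneg (Real.rpow_nonneg (by linarith [hr.2]) _) hc.le)
      (hlow r hr.1.le)
  linarith [mul_nonneg hlam hnn]
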